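/- Let A_d be an n×n complex matrix with I + A_d invertible, B_d an n×m matrix, C_d an m×n matrix, and D_d an m×m matrix, and let A_c, B_c, C_c, D_c be their Cayley transforms. Then the following are equivalent: (i) every eigenvalue of A_d lies in the open unit disc and the (n+m)×(n+m) block matrix [[A_d, B_d], [C_d, D_d]] is unitary; (ii) every eigenvalue of A_c has negative real part, A_c + A_c* + C_c*C_c = 0, D_c is unitary, and B_c = −C_c*D_c. -/

import Mathlib

open Matrix

open scoped Pointwise



lemma cfact (z : ℂ) (hz : 1 + z ≠ 0) : (((z - 1) / (1 + z)).re < 0 ↔ ‖z‖ < 1) := by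
  have h2 : 0 < Complex.normSq (1 + z) := Complex.normSq_pos.mpr hz
  have hre : ((z - 1) / (1 + z)).re = (Complex.normSq z - 1) / Complex.normSq (1 + z) := by
    rw [Complex.div_re, ← add_div]
    congr 1
    simp [Complex.normSq_apply]; ring
  have habs : ‖z‖ ^ 2 = Complex.normSq z := Complex.sq_norm z
  have hnn := norm_nonneg z
  rw [hre]
  constructor
  · intro h
    have hlt : Complex.normSq z < 1 := by
      by_contra hc
      push_neg at hc
      have : 0 ≤ (Complex.normSq z - 1) / Complex.normSq (1 + z) := div_nonneg (by linarith) h2.le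
      linarith
    nlinarith
  · intro h
    have : Complex.normSq z - 1 < 0 := by nlinarith
    exact div_neg_of_neg_of_pos this h2

lemma speccorr {n : ℕ} (Ad : Matrix (Fin n) (Fin n) ℂ)
    (hAd : IsUnit ((1 : Matrix (Fin n) (Fin n) ℂ) + Ad)) (w : ℂ) :
    w ∈ spectrum ℂ ((Ad - 1) * (1 + Ad)⁻¹) ↔
      ∃ z ∈ spectrum ℂ Ad, w = (z - 1) / (1 + z) := by
  have hdet : IsUnit ((1 + Ad).det) := (Matrix.isUnit_iff_isUnit_det _).mp hAd
  set S : Matrix (Fin n) (Fin n) ℂ := (1 + Ad)⁻¹ with hS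
  have hu : (hAd.unit : Matrix (Fin n) (Fin n) ℂ) = 1 + Ad := hAd.unit_spec
  have huinv : ((hAd.unit⁻¹ : (Matrix (Fin n) (Fin n) ℂ)ˣ) : Matrix (Fin n) (Fin n) ℂ) = S := by
    rw [Matrix.coe_units_inv, hu]
  have hAc' : (Ad - 1) * (1 + Ad)⁻¹ = algebraMap ℂ _ (1:ℂ) + (-2 : ℂ) • S := by
    have h1 : Ad - 1 = (1 + Ad) - (2 : Matrix (Fin n) (Fin n) ℂ) := by rw [← one_add_one_eq_two]; abel
    have h2 : (2 : Matrix (Fin n) (Fin n) ℂ) * S = (2:ℂ) • S := by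
      rw [two_mul, two_smul]
    rw [h1, Matrix.sub_mul, Matrix.mul_nonsing_inv _ hdet, ← hS, h2]
    simp [Algebra.algebraMap_eq_smul_one, sub_eq_add_neg]
  have r2 : ℂˣ := Units.mk0 (-2 : ℂ) (by norm_num)
  have e1 : spectrum ℂ ((Ad - 1) * (1 + Ad)⁻¹) = ({(1:ℂ)} : Set ℂ) + spectrum ℂ ((-2 : ℂ) • S) := by
    rw [hAc', spectrum.singleton_add_eq]
  have e2 : spectrum ℂ ((-2 : ℂ) • S) = (Units.mk0 (-2 : ℂ) (by norm_num)) • spectrum ℂ S := by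
    rw [← spectrum.unit_smul_eq_smul, Units.smul_def, Units.val_mk0]
  have e3 : ({(1:ℂ)} : Set ℂ) + spectrum ℂ Ad = spectrum ℂ ((1 : Matrix (Fin n) (Fin n) ℂ) + Ad) := by
    have := spectrum.singleton_add_eq Ad (1 : ℂ)
    rwa [_root_.map_one] at this
  constructor
  · intro hw
    rw [e1] at hw
    rw [Set.singleton_add] at hw
    obtain ⟨b, hb, hwb⟩ := hw
    rw [e2] at hb
    obtain ⟨μ, hμ, hbμ⟩ := hb
    have hμ0 : μ ≠ 0 := by
      intro h
      rw [← huinv, h] at hμ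
      exact spectrum.zero_notMem ℂ (hAd.unit⁻¹).isUnit hμ
    have hμmem : (↑(Units.mk0 μ hμ0) : ℂ) ∈ spectrum ℂ ((hAd.unit⁻¹ : (Matrix (Fin n) (Fin n) ℂ)ˣ) : Matrix (Fin n) (Fin n) ℂ) := by
      rw [huinv]; exact hμ
    have hinv := spectrum.inv_mem_iff.mp hμmem
    rw [inv_inv, hu] at hinv
    rw [← e3, Set.singleton_add] at hinv
    obtain ⟨z, hz, hzz⟩ := hinv
    refine ⟨z, hz, ?_⟩
    simp only [Units.val_inv_eq_inv_val, Units.val_mk0] at hzz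
    have hzz' : (1 : ℂ) + z = μ⁻¹ := hzz
    have h1z : (1 : ℂ) + z ≠ 0 := by
      rw [hzz']; exact inv_ne_zero hμ0
    have hμval : μ = (1 + z)⁻¹ := by
      rw [hzz', inv_inv]
    rw [← hwb, ← hbμ, hμval]
    simp only [Units.smul_def, Units.val_mk0, smul_eq_mul]
    field_simp
    ring
  · rintro ⟨z, hz, hw⟩
    have hzmem : (1 : ℂ) + z ∈ spectrum ℂ ((1 : Matrix (Fin n) (Fin n) ℂ) + Ad) := by
      rw [← e3, Set.singleton_add]
      exact ⟨z, hz, rfl⟩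
    have h1z : (1 : ℂ) + z ≠ 0 := by
      intro h
      rw [h] at hzmem
      exact spectrum.zero_notMem ℂ hAd hzmem
    have hmem2 : (↑(Units.mk0 ((1:ℂ)+z) h1z) : ℂ) ∈ spectrum ℂ ((hAd.unit : (Matrix (Fin n) (Fin n) ℂ)ˣ) : Matrix (Fin n) (Fin n) ℂ) := by
      rw [hu]; exact hzmem
    have hinv := spectrum.inv_mem_iff.mp hmem2
    rw [huinv] at hinv
    have : ((1:ℂ)+z)⁻¹ ∈ spectrum ℂ S := by
      simpa using hinv
    rw [e1, Set.singleton_add, e2]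
    refine ⟨(-2 : ℂ) * ((1:ℂ)+z)⁻¹, ⟨((1:ℂ)+z)⁻¹, this, by simp [Units.smul_def, smul_eq_mul]⟩, ?_⟩
    show (1 : ℂ) + (-2 : ℂ) * ((1:ℂ)+z)⁻¹ = w
    rw [hw]
    field_simp
    ring
lemma helper1 {R : Type*} [Ring R] (a b g t t' : R)
    (h1 : (1 + a) * t = 1) (h2 : t' * (1 + b) = 1) :
    (a - 1) * t + t' * (b - 1) + t' * (2 * g) * t = t' * (2 * (b * a + g - 1)) * t := by
  have e1 : t' * ((1 + b) * (a - 1)) * t = (a - 1) * t := by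
    rw [← mul_assoc, h2, one_mul]
  have e2 : t' * ((b - 1) * (1 + a)) * t = t' * (b - 1) := by
    rw [mul_assoc t', mul_assoc (b-1), h1, mul_one]
  have e3 : (2 : R) * (b * a + g - 1) = (1 + b) * (a - 1) + (b - 1) * (1 + a) + 2 * g := by
    noncomm_ring
  rw [e3, mul_add, mul_add, add_mul, add_mul, e1, e2]

lemma helper2 {R : Type*} [Ring R] (a b t t' : R)
    (h1 : (1 + a) * t = 1) (h2 : t' * (1 + b) = 1) :
    a * t + t' * b + t' * t - t' * (b * a) * t = 1 := by
  have e1 : t' * ((1 + b) * a) * t = a * t := by rw [← mul_assoc, h2, one_mul]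
  have e2 : t' * (b * (1 + a)) * t = t' * b := by
    rw [mul_assoc t', mul_assoc b, h1, mul_one]
  have e3 : t' * (1 : R) * t = t' * t := by rw [mul_one]
  have e4 : (1 + b) * a + b * (1 + a) + 1 - b * a = (1 + b) * (1 + a) := by noncomm_ring
  calc a * t + t' * b + t' * t - t' * (b * a) * t
      = t' * ((1+b)*a) * t + t' * (b*(1+a)) * t + t' * 1 * t - t' * (b*a) * t := by
        rw [e1, e2, e3]
    _ = t' * ((1+b)*a + b*(1+a) + 1 - b*a) * t := by noncomm_ring
    _ = t' * ((1+b)*(1+a)) * t := by rw [e4]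
    _ = 1 := by rw [← mul_assoc t' (1+b) (1+a), h2, one_mul, h1]

set_option maxHeartbeats 1000000 in
theorem stmt_14 {n m : ℕ}
    (Ad : Matrix (Fin n) (Fin n) ℂ) (Bd : Matrix (Fin n) (Fin m) ℂ)
    (Cd : Matrix (Fin m) (Fin n) ℂ) (Dd : Matrix (Fin m) (Fin m) ℂ)
    (hAd : IsUnit ((1 : Matrix (Fin n) (Fin n) ℂ) + Ad))
    (Ac : Matrix (Fin n) (Fin n) ℂ) (Bc : Matrix (Fin n) (Fin m) ℂ)
    (Cc : Matrix (Fin m) (Fin n) ℂ) (Dc : Matrix (Fin m) (Fin m) ℂ)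
    (hAc : Ac = (Ad - 1) * (1 + Ad)⁻¹)
    (hBc : Bc = (Real.sqrt 2 : ℂ) • ((1 + Ad)⁻¹ * Bd))
    (hCc : Cc = (Real.sqrt 2 : ℂ) • (Cd * (1 + Ad)⁻¹))
    (hDc : Dc = Dd - Cd * (1 + Ad)⁻¹ * Bd) :
    ((∀ z ∈ spectrum ℂ Ad, ‖z‖ < 1) ∧
        (Matrix.fromBlocks Ad Bd Cd Dd)ᴴ * Matrix.fromBlocks Ad Bd Cd Dd = 1 ∧
        Matrix.fromBlocks Ad Bd Cd Dd * (Matrix.fromBlocks Ad Bd Cd Dd)ᴴ = 1) ↔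
      ((∀ z ∈ spectrum ℂ Ac, z.re < 0) ∧
        Ac + Acᴴ + Ccᴴ * Cc = 0 ∧ Dcᴴ * Dc = 1 ∧ Bc = -(Ccᴴ * Dc)) := by
  have hdet : IsUnit ((1 + Ad).det) := (Matrix.isUnit_iff_isUnit_det _).mp hAd
  set T : Matrix (Fin n) (Fin n) ℂ := (1 + Ad)⁻¹ with hT
  have hPT : (1 + Ad) * T = 1 := Matrix.mul_nonsing_inv _ hdet
  have hTP : T * (1 + Ad) = 1 := Matrix.nonsing_inv_mul _ hdet
  have hQ : (1 + Ad)ᴴ = 1 + Adᴴ := by rw [conjTranspose_add, conjTranspose_one]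
  have hQT : Tᴴ * (1 + Adᴴ) = 1 := by
    have := congrArg conjTranspose hPT
    rwa [conjTranspose_mul, conjTranspose_one, hQ] at this
  have hTQ : (1 + Adᴴ) * Tᴴ = 1 := by
    have := congrArg conjTranspose hTP
    rwa [conjTranspose_mul, conjTranspose_one, hQ] at this
  -- scalar facts
  have hs : (Real.sqrt 2 : ℂ) * (Real.sqrt 2 : ℂ) = 2 := by
    rw [← Complex.ofReal_mul, Real.mul_self_sqrt (by norm_num)]
    norm_num
  have hs0 : (Real.sqrt 2 : ℂ) ≠ 0 :=
    Complex.ofReal_ne_zero.mpr (ne_of_gt (Real.sqrt_pos.mpr two_pos))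
  -- conjugate transposes
  have hCcH : Ccᴴ = (Real.sqrt 2 : ℂ) • (Tᴴ * Cdᴴ) := by
    rw [hCc]
    rw [Matrix.conjTranspose_smul, conjTranspose_mul]
    congr 1
    rw [Complex.star_def, Complex.conj_ofReal]
  have hAcH : Acᴴ = Tᴴ * (Adᴴ - 1) := by
    rw [hAc, conjTranspose_mul, conjTranspose_sub, conjTranspose_one]
  have hDcH : Dcᴴ = Ddᴴ - Bdᴴ * (Tᴴ * Cdᴴ) := by
    rw [hDc, conjTranspose_sub, conjTranspose_mul, conjTranspose_mul]
  -- key identity 1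
  have hCC : Ccᴴ * Cc = Tᴴ * (2 * (Cdᴴ * Cd)) * T := by
    rw [hCcH, hCc, Matrix.smul_mul, Matrix.mul_smul, smul_smul, hs]
    have : Tᴴ * Cdᴴ * (Cd * T) = Tᴴ * (Cdᴴ * Cd) * T := by
      rw [Matrix.mul_assoc, Matrix.mul_assoc, Matrix.mul_assoc]
    rw [this, two_smul, two_mul, Matrix.mul_add, Matrix.add_mul]
  have key1 : Ac + Acᴴ + Ccᴴ * Cc = Tᴴ * (2 * (Adᴴ * Ad + Cdᴴ * Cd - 1)) * T := by
    rw [hAcH, hAc, hCC]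
    exact helper1 Ad Adᴴ (Cdᴴ * Cd) T Tᴴ hPT hQT
  have eq1 : (Ac + Acᴴ + Ccᴴ * Cc = 0) ↔ (Adᴴ * Ad + Cdᴴ * Cd = 1) := by
    rw [key1]
    constructor
    · intro h
      have h2 : (2 : Matrix (Fin n) (Fin n) ℂ) * (Adᴴ * Ad + Cdᴴ * Cd - 1) = 0 := by
        calc (2 : Matrix (Fin n) (Fin n) ℂ) * (Adᴴ * Ad + Cdᴴ * Cd - 1)
            = ((1 + Adᴴ) * Tᴴ) * (2 * (Adᴴ * Ad + Cdᴴ * Cd - 1)) * (T * (1 + Ad)) := by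
              rw [hTQ, hTP, one_mul, mul_one]
          _ = (1 + Adᴴ) * (Tᴴ * (2 * (Adᴴ * Ad + Cdᴴ * Cd - 1)) * T) * (1 + Ad) := by
              noncomm_ring
          _ = 0 := by rw [h]; simp
      have h3 : (2 : ℂ) • (Adᴴ * Ad + Cdᴴ * Cd - 1) = 0 := by
        rw [two_smul, ← two_mul]; exact h2
      have h4 : Adᴴ * Ad + Cdᴴ * Cd - 1 = 0 := by
        rcases smul_eq_zero.mp h3 with h | h
        · exact absurd h two_ne_zero
        · exact h
      exact sub_eq_zero.mp h4
    · intro h; rw [h]; simp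
  -- key identity 3 (Bc)
  have key3 : Bc + Ccᴴ * Dc =
      (Real.sqrt 2 : ℂ) • (Tᴴ * ((1 + Adᴴ) * (T * Bd) + (Cdᴴ * Dd - Cdᴴ * (Cd * (T * Bd))))) := by
    have e1 : T * Bd = Tᴴ * ((1 + Adᴴ) * (T * Bd)) := by
      rw [← Matrix.mul_assoc, hQT, Matrix.one_mul]
    have inner : T * Bd + Tᴴ * Cdᴴ * (Dd - Cd * T * Bd) =
        Tᴴ * ((1 + Adᴴ) * (T * Bd) + (Cdᴴ * Dd - Cdᴴ * (Cd * (T * Bd)))) := by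
      simp only [Matrix.mul_sub, Matrix.mul_add, Matrix.mul_assoc]
      nth_rewrite 1 [e1]
      rfl
    rw [hBc, hCcH, hDc, Matrix.smul_mul, ← smul_add, inner]
  have eq3 : (Bc = -(Ccᴴ * Dc)) ↔
      ((1 + Adᴴ) * (T * Bd) + (Cdᴴ * Dd - Cdᴴ * (Cd * (T * Bd))) = 0) := by
    rw [eq_neg_iff_add_eq_zero, key3]
    constructor
    · intro h
      have h1 : Tᴴ * ((1 + Adᴴ) * (T * Bd) + (Cdᴴ * Dd - Cdᴴ * (Cd * (T * Bd)))) = 0 :=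
        (smul_eq_zero.mp h).resolve_left hs0
      calc (1 + Adᴴ) * (T * Bd) + (Cdᴴ * Dd - Cdᴴ * (Cd * (T * Bd)))
          = ((1 + Adᴴ) * Tᴴ) * ((1 + Adᴴ) * (T * Bd) + (Cdᴴ * Dd - Cdᴴ * (Cd * (T * Bd)))) := by
            rw [hTQ, Matrix.one_mul]
        _ = (1 + Adᴴ) * (Tᴴ * ((1 + Adᴴ) * (T * Bd) + (Cdᴴ * Dd - Cdᴴ * (Cd * (T * Bd))))) := by
            rw [Matrix.mul_assoc]
        _ = 0 := by rw [h1, Matrix.mul_zero]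
    · intro h; rw [h, Matrix.mul_zero, smul_zero]
  -- given (a), X2 = Adᴴ Bd + Cdᴴ Dd
  have eqX2 : Adᴴ * Ad + Cdᴴ * Cd = 1 →
      (1 + Adᴴ) * (T * Bd) + (Cdᴴ * Dd - Cdᴴ * (Cd * (T * Bd))) = Adᴴ * Bd + Cdᴴ * Dd := by
    intro da
    have hCdC : Cdᴴ * Cd = 1 - Adᴴ * Ad := by
      rw [← da]; abel
    calc (1 + Adᴴ) * (T * Bd) + (Cdᴴ * Dd - Cdᴴ * (Cd * (T * Bd)))
        = T * Bd + Adᴴ * (T * Bd) + (Cdᴴ * Dd - (T * Bd - Adᴴ * (Ad * (T * Bd)))) := by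
          rw [Matrix.add_mul, Matrix.one_mul, ← Matrix.mul_assoc Cdᴴ Cd, hCdC,
            Matrix.sub_mul, Matrix.one_mul, Matrix.mul_assoc Adᴴ Ad]
      _ = Adᴴ * (T * Bd) + Adᴴ * (Ad * (T * Bd)) + Cdᴴ * Dd := by abel
      _ = Adᴴ * ((1 + Ad) * (T * Bd)) + Cdᴴ * Dd := by
          rw [Matrix.add_mul, Matrix.one_mul, Matrix.mul_add]
      _ = Adᴴ * Bd + Cdᴴ * Dd := by
          rw [← Matrix.mul_assoc (1 + Ad), hPT, Matrix.one_mul]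
  -- key identity 2 (Dc), given (a) and (b)
  have key2 : Adᴴ * Ad + Cdᴴ * Cd = 1 → Adᴴ * Bd + Cdᴴ * Dd = 0 →
      Dcᴴ * Dc = Bdᴴ * Bd + Ddᴴ * Dd := by
    intro da db
    have hCdC : Cdᴴ * Cd = 1 - Adᴴ * Ad := by rw [← da]; abel
    have hCdD : Cdᴴ * Dd = -(Adᴴ * Bd) := by
      rw [eq_neg_iff_add_eq_zero, add_comm]; exact db
    have hDdC : Ddᴴ * Cd = -(Bdᴴ * Ad) := by
      have h := congrArg conjTranspose hCdD
      simpa using h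
    have K1 : Ad * T + Tᴴ * Adᴴ + Tᴴ * T - Tᴴ * (Adᴴ * Ad) * T = 1 :=
      helper2 Ad Adᴴ T Tᴴ hPT hQT
    have K2 := congrArg (fun M => Bdᴴ * M * Bd) K1
    simp only [Matrix.add_mul, Matrix.sub_mul, Matrix.mul_add, Matrix.mul_sub,
      Matrix.mul_assoc, Matrix.mul_one, Matrix.one_mul] at K2
    have r2 : ∀ X : Matrix (Fin n) (Fin m) ℂ, Ddᴴ * (Cd * X) = -(Bdᴴ * (Ad * X)) := by
      intro X
      rw [← Matrix.mul_assoc, hDdC, Matrix.neg_mul, Matrix.mul_assoc]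
    have r3 : ∀ X : Matrix (Fin n) (Fin m) ℂ, Cdᴴ * (Cd * X) = X - Adᴴ * (Ad * X) := by
      intro X
      rw [← Matrix.mul_assoc, hCdC, Matrix.sub_mul, Matrix.one_mul, Matrix.mul_assoc]
    rw [hDcH, hDc]
    simp only [Matrix.sub_mul, Matrix.mul_sub, Matrix.mul_assoc]
    rw [r2, r3, hCdD]
    simp only [Matrix.mul_sub, Matrix.mul_add, Matrix.mul_neg, sub_neg_eq_add]
    rw [← K2]
    abel
  constructor
  · rintro ⟨hspec, hU1, -⟩
    have hprod : fromBlocks (Adᴴ*Ad + Cdᴴ*Cd) (Adᴴ*Bd + Cdᴴ*Dd) (Bdᴴ*Ad + Ddᴴ*Cd)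
        (Bdᴴ*Bd + Ddᴴ*Dd) =
        fromBlocks (1 : Matrix (Fin n) (Fin n) ℂ) 0 0 (1 : Matrix (Fin m) (Fin m) ℂ) := by
      rw [fromBlocks_one, ← hU1, fromBlocks_conjTranspose, fromBlocks_multiply]
    have da : Adᴴ*Ad + Cdᴴ*Cd = 1 := by
      have h := congrArg Matrix.toBlocks₁₁ hprod
      rwa [Matrix.toBlocks_fromBlocks₁₁] at h
    have db : Adᴴ*Bd + Cdᴴ*Dd = 0 := by
      have h := congrArg Matrix.toBlocks₁₂ hprod
      rwa [Matrix.toBlocks_fromBlocks₁₂] at h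
    have dc : Bdᴴ*Bd + Ddᴴ*Dd = 1 := by
      have h := congrArg Matrix.toBlocks₂₂ hprod
      rwa [Matrix.toBlocks_fromBlocks₂₂] at h
    refine ⟨?_, eq1.mpr da, ?_, ?_⟩
    · intro w hw
      rw [hAc, hT] at hw
      obtain ⟨z, hz, hwz⟩ := (speccorr Ad hAd w).mp hw
      have habs := hspec z hz
      have hz1 : (1:ℂ) + z ≠ 0 := by
        intro h
        have hzeq : z = -1 := by linear_combination h
        rw [hzeq] at habs
        simp at habs
      rw [hwz]
      exact (cfact z hz1).mpr habs
    · rw [key2 da db]; exact dc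
    · exact eq3.mpr (by rw [eqX2 da]; exact db)
  · rintro ⟨hspec, h1, h2, h3⟩
    have da := eq1.mp h1
    have db : Adᴴ*Bd + Cdᴴ*Dd = 0 := by rw [← eqX2 da]; exact eq3.mp h3
    have dc : Bdᴴ*Bd + Ddᴴ*Dd = 1 := by rw [← key2 da db]; exact h2
    have dbl : Bdᴴ*Ad + Ddᴴ*Cd = 0 := by
      have h := congrArg conjTranspose db
      simpa [conjTranspose_add, conjTranspose_mul] using h
    have hU1 : (fromBlocks Ad Bd Cd Dd)ᴴ * fromBlocks Ad Bd Cd Dd = 1 := by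
      rw [fromBlocks_conjTranspose, fromBlocks_multiply, da, db, dbl, dc, fromBlocks_one]
    refine ⟨?_, hU1, mul_eq_one_comm.mp hU1⟩
    intro z hz
    have hz1 : (1:ℂ) + z ≠ 0 := by
      intro h
      have hmem : (1:ℂ)+z ∈ spectrum ℂ ((1:Matrix (Fin n) (Fin n) ℂ) + Ad) := by
        have e3' := spectrum.singleton_add_eq Ad (1:ℂ)
        rw [_root_.map_one] at e3'
        rw [← e3', Set.singleton_add]
        exact ⟨z, hz, rfl⟩
      rw [h] at hmem
      exact spectrum.zero_notMem ℂ hAd hmem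
    have hw : (z-1)/(1+z) ∈ spectrum ℂ Ac := by
      rw [hAc, hT]
      exact (speccorr Ad hAd _).mpr ⟨z, hz, rfl⟩
    exact (cfact z hz1).mp (hspec _ hw)
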